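/- Let G' be the Type B Whitney flip of a simple graph G along (H, v1, v2). Then G' is bipartite if and only if G is bipartite. -/

import Mathlib

open SimpleGraph

/-- The vertex map of the Type B Whitney flip: `v1 ↦ v2`, all other vertices fixed. -/
def tauB {V : Type*} [DecidableEq V] (v1 v2 : V) (x : V) : V :=
  if x = v1 then v2 else x

/-- The Type B Whitney flip of `G` along `(H, v1, v2)` (where `v2 ∉ H`): edges with both
endpoints in `H` are mapped by `tauB v1 v2`; all other edges are kept. -/
def typeBFlip {V : Type*} [DecidableEq V] (G : SimpleGraph V) (v1 v2 : V) (H : Set V)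
    (hv2 : v2 ∉ H) : SimpleGraph V where
  Adj a b :=
    (∃ x y : V, x ∈ H ∧ y ∈ H ∧ G.Adj x y ∧ a = tauB v1 v2 x ∧ b = tauB v1 v2 y) ∨
    (¬(a ∈ H ∧ b ∈ H) ∧ G.Adj a b)
  symm := by
    constructor
    rintro a b (⟨x, y, hx, hy, h, ha, hb⟩ | ⟨hn, h⟩)
    · exact Or.inl ⟨y, x, hy, hx, h.symm, hb, ha⟩
    · exact Or.inr ⟨fun ⟨hb', ha'⟩ => hn ⟨ha', hb'⟩, h.symm⟩
  loopless := by
    constructor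
    rintro a (⟨x, y, hx, hy, h, ha, hb⟩ | ⟨_, h⟩)
    · have hxy : tauB v1 v2 x = tauB v1 v2 y := ha ▸ hb
      unfold tauB at hxy
      split_ifs at hxy with hx1 hy1 hy1
      · exact h.ne (hx1.trans hy1.symm)
      · exact hv2 (hxy ▸ hy)
      · exact hv2 (hxy ▸ hx)
      · exact h.ne hxy
    · exact G.loopless.irrefl _ h

private lemma fin2_add_one_ne (x : Fin 2) : x + 1 ≠ x := by revert x; decide

private lemma fin2_aux : ∀ a b c : Fin 2, a ≠ b → a ≠ c → b + 1 ≠ c := by decide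

/-- the Type B Whitney flip of a simple graph is bipartite (2-colorable) if
and only if the original graph is bipartite. -/
theorem typeBFlip_bipartite_iff {V : Type*} [DecidableEq V] (G : SimpleGraph V)
    (v1 v2 : V) (hadj : G.Adj v1 v2)
    (H : Set V) (h1 : v1 ∈ H) (hv2 : v2 ∉ H) (hHconn : (G.induce H).Connected)
    (hHedge : ∀ x y : V, G.Adj x y → x ∈ H \ ({v1} : Set V) → y ∈ H) :
    (typeBFlip G v1 v2 H hv2).Colorable 2 ↔ G.Colorable 2 := by
  classical
  constructor
  · rintro ⟨c'⟩
    have hc' : ∀ {a b}, (typeBFlip G v1 v2 H hv2).Adj a b → c' a ≠ c' b :=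
      fun h => c'.valid h
    have hv12 : (typeBFlip G v1 v2 H hv2).Adj v1 v2 := Or.inr ⟨fun h => hv2 h.2, hadj⟩
    set f : V → Fin 2 := fun x => if x ∈ H then c' (tauB v1 v2 x) + 1 else c' x with hf
    have key : ∀ a b : V, G.Adj a b → a ∈ H → b ∉ H → f a ≠ f b := by
      intro a b hab ha hb
      have hav1 : a = v1 := by
        by_contra h
        exact hb (hHedge a b hab ⟨ha, h⟩)
      have hτ : tauB v1 v2 a = v2 := by simp [tauB, hav1]
      simp only [hf, if_pos ha, if_neg hb, hτ]
      by_cases hbv2 : b = v2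
      · rw [hbv2]
        exact fin2_add_one_ne _
      · have hab' : G.Adj v1 b := by rwa [hav1] at hab
        have hadjb : (typeBFlip G v1 v2 H hv2).Adj v1 b := Or.inr ⟨fun h => hb h.2, hab'⟩
        exact fin2_aux _ _ _ (hc' hv12) (hc' hadjb)
    refine ⟨SimpleGraph.Coloring.mk f ?_⟩
    intro a b hab
    by_cases ha : a ∈ H <;> by_cases hb : b ∈ H
    · have hadj' : (typeBFlip G v1 v2 H hv2).Adj (tauB v1 v2 a) (tauB v1 v2 b) :=
        Or.inl ⟨a, b, ha, hb, hab, rfl, rfl⟩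
      simp only [hf, if_pos ha, if_pos hb]
      intro h
      exact hc' hadj' (add_right_cancel h)
    · exact key a b hab ha hb
    · exact (key b a hab.symm hb ha).symm
    · simp only [hf, if_neg ha, if_neg hb]
      exact hc' (Or.inr ⟨fun h => ha h.1, hab⟩)
  · rintro ⟨c⟩
    have hc : ∀ {a b}, G.Adj a b → c a ≠ c b := fun h => c.valid h
    set f : V → Fin 2 := fun w => if w ∈ H ∧ w ≠ v1 then c w + 1 else c w with hf
    refine ⟨SimpleGraph.Coloring.mk f ?_⟩
    rintro a b (⟨x, y, hx, hy, hxy, rfl, rfl⟩ | ⟨hn, hab⟩)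
    · by_cases hx1 : x = v1 <;> by_cases hy1 : y = v1
      · rw [hx1, hy1] at hxy; exact absurd hxy (G.loopless.irrefl _)
      · have h1' : tauB v1 v2 x = v2 := by simp [tauB, hx1]
        have h2' : tauB v1 v2 y = y := by simp [tauB, hy1]
        have hxy' : G.Adj v1 y := by rwa [hx1] at hxy
        rw [h1', h2']
        simp only [hf, if_neg (fun h : v2 ∈ H ∧ v2 ≠ v1 => hv2 h.1),
          if_pos (⟨hy, hy1⟩ : y ∈ H ∧ y ≠ v1)]
        exact (fin2_aux _ _ _ (hc hxy') (hc hadj)).symm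
      · have h1' : tauB v1 v2 y = v2 := by simp [tauB, hy1]
        have h2' : tauB v1 v2 x = x := by simp [tauB, hx1]
        have hxy' : G.Adj v1 x := by rw [← hy1]; exact hxy.symm
        rw [h1', h2']
        simp only [hf, if_neg (fun h : v2 ∈ H ∧ v2 ≠ v1 => hv2 h.1),
          if_pos (⟨hx, hx1⟩ : x ∈ H ∧ x ≠ v1)]
        exact fin2_aux _ _ _ (hc hxy') (hc hadj)
      · have h1' : tauB v1 v2 x = x := by simp [tauB, hx1]
        have h2' : tauB v1 v2 y = y := by simp [tauB, hy1]
        rw [h1', h2']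
        simp only [hf, if_pos (⟨hx, hx1⟩ : x ∈ H ∧ x ≠ v1),
          if_pos (⟨hy, hy1⟩ : y ∈ H ∧ y ≠ v1)]
        intro h
        exact hc hxy (add_right_cancel h)
    · by_cases ha : a ∈ H <;> by_cases hb : b ∈ H
      · exact absurd ⟨ha, hb⟩ hn
      · have hav1 : a = v1 := by
          by_contra h
          exact hb (hHedge a b hab ⟨ha, h⟩)
        simp only [hf, if_neg (fun h : a ∈ H ∧ a ≠ v1 => h.2 hav1),
          if_neg (fun h : b ∈ H ∧ b ≠ v1 => hb h.1)]
        exact hc hab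
      · have hbv1 : b = v1 := by
          by_contra h
          exact ha (hHedge b a hab.symm ⟨hb, h⟩)
        simp only [hf, if_neg (fun h : b ∈ H ∧ b ≠ v1 => h.2 hbv1),
          if_neg (fun h : a ∈ H ∧ a ≠ v1 => ha h.1)]
        exact hc hab
      · simp only [hf, if_neg (fun h : a ∈ H ∧ a ≠ v1 => ha h.1),
          if_neg (fun h : b ∈ H ∧ b ≠ v1 => hb h.1)]
        exact hc hab
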